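/- Let P be a plane poset, i.e., a finite set with two partial orders ≤_h and ≤_r such that any two distinct elements are comparable for ≤_h if and only if they are not comparable for ≤_r. Define x ≤ y iff (x ≤_h y or x ≤_r y). Then ≤ is a total order on P. -/
import Mathlib


/-- A plane poset: a finite set with two partial orders `leh` and `ler` such that
two distinct elements are comparable for `leh` iff they are not comparable for `ler`. -/
structure PlanePoset (α : Type) where
  leh : α → α → Prop
  ler : α → α → Prop
  leh_refl : ∀ x, leh x x
  leh_antisymm : ∀ ⦃x y⦄, leh x y → leh y x → x = y
  leh_trans : ∀ ⦃x y z⦄, leh x y → leh y z → leh x z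
  ler_refl : ∀ x, ler x x
  ler_antisymm : ∀ ⦃x y⦄, ler x y → ler y x → x = y
  ler_trans : ∀ ⦃x y z⦄, ler x y → ler y z → ler x z
  compat : ∀ x y, x ≠ y → ((leh x y ∨ leh y x) ↔ ¬(ler x y ∨ ler y x))

theorem stmt0 {α : Type} [Fintype α] (P : PlanePoset α) :
    (∀ x, P.leh x x ∨ P.ler x x) ∧
    (∀ x y, (P.leh x y ∨ P.ler x y) → (P.leh y x ∨ P.ler y x) → x = y) ∧
    (∀ x y z, (P.leh x y ∨ P.ler x y) → (P.leh y z ∨ P.ler y z) →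
      (P.leh x z ∨ P.ler x z)) ∧
    (∀ x y, (P.leh x y ∨ P.ler x y) ∨ (P.leh y x ∨ P.ler y x)) := by
  refine ⟨fun x => Or.inl (P.leh_refl x), ?_, ?_, ?_⟩
  · rintro x y (h1 | h1) (h2 | h2)
    · exact P.leh_antisymm h1 h2
    · by_contra hne
      exact (P.compat x y hne).mp (Or.inl h1) (Or.inr h2)
    · by_contra hne
      exact (P.compat x y hne).mp (Or.inr h2) (Or.inl h1)
    · exact P.ler_antisymm h1 h2
  · rintro x y z (h1 | h1) (h2 | h2)
    · exact Or.inl (P.leh_trans h1 h2)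
    · -- leh x y, ler y z
      rcases eq_or_ne x y with rfl | hxy
      · exact Or.inr h2
      rcases eq_or_ne y z with rfl | hyz
      · exact Or.inl h1
      rcases eq_or_ne x z with rfl | hxz
      · exact Or.inl (P.leh_refl x)
      rcases Classical.em (P.leh x z ∨ P.leh z x) with (h | h) | h
      · exact Or.inl h
      · -- leh z x, leh x y gives leh z y : contradicts ler y z
        exact absurd (Or.inr (P.leh_trans h h1))
          (not_not.mpr (Or.inl h2) ∘ (P.compat y z hyz).mp)
      · -- not h-comparable, so r-comparable
        have hr : P.ler x z ∨ P.ler z x := by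
          by_contra hr
          exact h ((P.compat x z hxz).mpr hr)
        rcases hr with hr | hr
        · exact Or.inr hr
        · -- ler y z, ler z x gives ler y x : contradicts leh x y
          exact absurd (Or.inr (P.ler_trans h2 hr))
            ((P.compat x y hxy).mp (Or.inl h1))
    · -- ler x y, leh y z
      rcases eq_or_ne x y with rfl | hxy
      · exact Or.inl h2
      rcases eq_or_ne y z with rfl | hyz
      · exact Or.inr h1
      rcases eq_or_ne x z with rfl | hxz
      · exact Or.inl (P.leh_refl x)
      rcases Classical.em (P.leh x z ∨ P.leh z x) with (h | h) | h
      · exact Or.inl h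
      · -- leh y z, leh z x gives leh y x : contradicts ler x y
        exact absurd (Or.inr (P.leh_trans h2 h))
          (not_not.mpr (Or.inl h1) ∘ (P.compat x y hxy).mp)
      · have hr : P.ler x z ∨ P.ler z x := by
          by_contra hr
          exact h ((P.compat x z hxz).mpr hr)
        rcases hr with hr | hr
        · exact Or.inr hr
        · -- ler z x, ler x y gives ler z y : contradicts leh y z
          exact absurd (Or.inr (P.ler_trans hr h1))
            ((P.compat y z hyz).mp (Or.inl h2))
    · exact Or.inr (P.ler_trans h1 h2)
  · intro x y
    rcases eq_or_ne x y with rfl | hne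
    · exact Or.inl (Or.inl (P.leh_refl x))
    rcases Classical.em (P.leh x y ∨ P.leh y x) with (h | h) | h
    · exact Or.inl (Or.inl h)
    · exact Or.inr (Or.inl h)
    · have hr : P.ler x y ∨ P.ler y x := by
        by_contra hr
        exact h ((P.compat x y hne).mpr hr)
      rcases hr with hr | hr
      · exact Or.inl (Or.inr hr)
      · exact Or.inr (Or.inr hr)
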